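/- Let a₀,...,a_k be nonzero reals and γ₀ > ... > γ_k reals, F(s) = Σᵢ aᵢ s^{γᵢ}. If F has no zeros in {Re s > 0}, then the set of zeros of F in the closed right half plane minus the origin is a finite subset of the imaginary axis contained in {iy : r ≤ |y| ≤ R} for some 0 < r < R. -/

import Mathlib

open Complex Finset Filter Topology

lemma abs_term_aux (b : ℝ) (g : ℝ) {s : ℂ} (hs : s ≠ 0) :
    ‖(b : ℂ) * s ^ (g : ℂ)‖ = |b| * ‖s‖ ^ g := by
  rw [norm_mul, Complex.norm_real, Real.norm_eq_abs, Complex.norm_cpow_of_ne_zero hs]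
  simp

/-- Helper A: dominant term implies nonvanishing. -/
lemma dominant_ne_zero_aux {k : ℕ} (a : Fin (k+1) → ℝ) (γ : Fin (k+1) → ℝ)
    (j : Fin (k+1)) {s : ℂ} (hs : s ≠ 0)
    (hdom : ∑ i ∈ univ.erase j, |a i| * ‖s‖ ^ (γ i)
      < |a j| * ‖s‖ ^ (γ j)) :
    (∑ i : Fin (k+1), (a i : ℂ) * s ^ (γ i : ℂ)) ≠ 0 := by
  intro h0
  have hsplit : (a j : ℂ) * s ^ (γ j : ℂ)
      = -∑ i ∈ univ.erase j, (a i : ℂ) * s ^ (γ i : ℂ) := by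
    have := Finset.add_sum_erase univ (fun i => (a i : ℂ) * s ^ (γ i : ℂ))
      (mem_univ j)
    rw [h0] at this
    linear_combination this
  have h1 : |a j| * ‖s‖ ^ (γ j)
      ≤ ∑ i ∈ univ.erase j, |a i| * ‖s‖ ^ (γ i) := by
    calc |a j| * ‖s‖ ^ (γ j)
        = ‖∑ i ∈ univ.erase j, (a i : ℂ) * s ^ (γ i : ℂ)‖ := by
          rw [← abs_term_aux (a j) (γ j) hs, hsplit, norm_neg]
      _ ≤ ∑ i ∈ univ.erase j, ‖(a i : ℂ) * s ^ (γ i : ℂ)‖ :=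
          norm_sum_le _ _
      _ = ∑ i ∈ univ.erase j, |a i| * ‖s‖ ^ (γ i) :=
          Finset.sum_congr rfl fun i _ => abs_term_aux _ _ hs
  exact absurd h1 (not_le.mpr hdom)

/-- Helper B: bound for large radius, dominant index `0`. -/
lemma large_bound_aux {k : ℕ} (a : Fin (k+1) → ℝ) (γ : Fin (k+1) → ℝ)
    (ha : ∀ i, a i ≠ 0) (hγ : StrictAnti γ) :
    ∃ R : ℝ, 1 ≤ R ∧ ∀ t : ℝ, R < t →
      ∑ i ∈ univ.erase (0 : Fin (k+1)), |a i| * t ^ (γ i)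
        < |a 0| * t ^ (γ 0) := by
  have htend : Tendsto (fun t : ℝ =>
      ∑ i ∈ univ.erase (0 : Fin (k+1)), |a i| * t ^ (γ i - γ 0)) atTop (𝓝 0) := by
    have : Tendsto (fun t : ℝ =>
        ∑ i ∈ univ.erase (0 : Fin (k+1)), |a i| * t ^ (γ i - γ 0)) atTop
        (𝓝 (∑ i ∈ univ.erase (0 : Fin (k+1)), |a i| * 0)) := by
      refine tendsto_finset_sum _ fun i hi => ?_
      have hpos : 0 < γ 0 - γ i := sub_pos.mpr (hγ (Fin.pos_of_ne_zero (Finset.mem_erase.mp hi).1))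
      have := (tendsto_rpow_neg_atTop hpos).const_mul (|a i|)
      simpa [neg_sub] using this
    simpa using this
  have hev : ∀ᶠ t : ℝ in atTop,
      ∑ i ∈ univ.erase (0 : Fin (k+1)), |a i| * t ^ (γ i - γ 0) < |a 0| :=
    htend.eventually_lt_const (abs_pos.mpr (ha 0))
  obtain ⟨R₀, hR₀⟩ := (hev.and (eventually_ge_atTop 1)).exists_forall_of_atTop
  refine ⟨max R₀ 1, le_max_right _ _, fun t ht => ?_⟩
  have hR : R₀ ≤ t := le_of_lt (lt_of_le_of_lt (le_max_left _ _) ht)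
  obtain ⟨hlt, -⟩ := hR₀ t hR
  have htpos : (0:ℝ) < t := lt_of_lt_of_le one_pos
    (le_of_lt (lt_of_le_of_lt (le_max_right _ _) ht))
  have hkey : ∀ i : Fin (k+1), t ^ (γ i) = t ^ (γ i - γ 0) * t ^ (γ 0) := by
    intro i
    rw [← Real.rpow_add htpos]
    ring_nf
  calc ∑ i ∈ univ.erase (0 : Fin (k+1)), |a i| * t ^ (γ i)
      = (∑ i ∈ univ.erase (0 : Fin (k+1)), |a i| * t ^ (γ i - γ 0)) * t ^ (γ 0) := by
        rw [Finset.sum_mul]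
        exact Finset.sum_congr rfl fun i _ => by rw [hkey i]; ring
    _ < |a 0| * t ^ (γ 0) :=
        mul_lt_mul_of_pos_right hlt (Real.rpow_pos_of_pos htpos _)

/-- Helper C: bound for small radius, dominant index `Fin.last k`. -/
lemma small_bound_aux {k : ℕ} (a : Fin (k+1) → ℝ) (γ : Fin (k+1) → ℝ)
    (ha : ∀ i, a i ≠ 0) (hγ : StrictAnti γ) :
    ∃ r : ℝ, 0 < r ∧ ∀ t : ℝ, 0 < t → t < r →
      ∑ i ∈ univ.erase (Fin.last k), |a i| * t ^ (γ i)
        < |a (Fin.last k)| * t ^ (γ (Fin.last k)) := by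
  have hexp : ∀ i ∈ univ.erase (Fin.last k), 0 < γ i - γ (Fin.last k) := by
    intro i hi
    exact sub_pos.mpr (hγ (Fin.lt_last_iff_ne_last.mpr (Finset.mem_erase.mp hi).1))
  have htend : Tendsto (fun t : ℝ =>
      ∑ i ∈ univ.erase (Fin.last k), |a i| * t ^ (γ i - γ (Fin.last k)))
      (𝓝 0) (𝓝 0) := by
    have h1 : Tendsto (fun t : ℝ =>
        ∑ i ∈ univ.erase (Fin.last k), |a i| * t ^ (γ i - γ (Fin.last k)))
        (𝓝 0) (𝓝 (∑ i ∈ univ.erase (Fin.last k),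
          |a i| * (0:ℝ) ^ (γ i - γ (Fin.last k)))) := by
      refine tendsto_finset_sum _ fun i hi => ?_
      exact ((Real.continuousAt_rpow_const 0 _ (Or.inr (hexp i hi).le)).tendsto).const_mul _
    have h0 : (∑ i ∈ univ.erase (Fin.last k),
        |a i| * (0:ℝ) ^ (γ i - γ (Fin.last k))) = 0 :=
      Finset.sum_eq_zero fun i hi => by rw [Real.zero_rpow (hexp i hi).ne', mul_zero]
    rwa [h0] at h1
  have hev : ∀ᶠ t : ℝ in 𝓝 (0:ℝ),
      ∑ i ∈ univ.erase (Fin.last k), |a i| * t ^ (γ i - γ (Fin.last k))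
        < |a (Fin.last k)| :=
    htend.eventually_lt_const (abs_pos.mpr (ha _))
  rw [Metric.eventually_nhds_iff] at hev
  obtain ⟨ε, hε, hball⟩ := hev
  refine ⟨ε, hε, fun t ht htr => ?_⟩
  have hlt := hball (show dist t 0 < ε by simpa [Real.dist_eq, abs_of_pos ht] using htr)
  have hkey : ∀ i : Fin (k+1),
      t ^ (γ i) = t ^ (γ i - γ (Fin.last k)) * t ^ (γ (Fin.last k)) := by
    intro i
    rw [← Real.rpow_add ht]
    ring_nf
  calc ∑ i ∈ univ.erase (Fin.last k), |a i| * t ^ (γ i)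
      = (∑ i ∈ univ.erase (Fin.last k), |a i| * t ^ (γ i - γ (Fin.last k)))
          * t ^ (γ (Fin.last k)) := by
        rw [Finset.sum_mul]
        exact Finset.sum_congr rfl fun i _ => by rw [hkey i]; ring
    _ < |a (Fin.last k)| * t ^ (γ (Fin.last k)) :=
        mul_lt_mul_of_pos_right hlt (Real.rpow_pos_of_pos ht _)

theorem F_zero_set_finite (k : ℕ) (a : Fin (k+1) → ℝ) (γ : Fin (k+1) → ℝ)
    (ha : ∀ i, a i ≠ 0) (hγ : StrictAnti γ)
    (hF : ∀ s : ℂ, 0 < s.re →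
      (∑ i : Fin (k+1), (a i : ℂ) * s ^ (γ i : ℂ)) ≠ 0) :
    ∃ r R : ℝ, 0 < r ∧ r < R ∧
      Set.Finite {s : ℂ | 0 ≤ s.re ∧ s ≠ 0 ∧
        (∑ i : Fin (k+1), (a i : ℂ) * s ^ (γ i : ℂ)) = 0} ∧
      {s : ℂ | 0 ≤ s.re ∧ s ≠ 0 ∧
        (∑ i : Fin (k+1), (a i : ℂ) * s ^ (γ i : ℂ)) = 0} ⊆
        {s : ℂ | s.re = 0 ∧ r ≤ ‖s‖ ∧ ‖s‖ ≤ R} := by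
  obtain ⟨R, hR1, hRbound⟩ := large_bound_aux a γ ha hγ
  obtain ⟨r₀, hr₀, hrbound⟩ := small_bound_aux a γ ha hγ
  set r : ℝ := min r₀ (R / 2) with hr_def
  have hrpos : 0 < r := lt_min hr₀ (by linarith)
  have hrR : r < R := lt_of_le_of_lt (min_le_right _ _) (by linarith)
  set Z : Set ℂ := {s : ℂ | 0 ≤ s.re ∧ s ≠ 0 ∧
      (∑ i : Fin (k+1), (a i : ℂ) * s ^ (γ i : ℂ)) = 0} with hZ_def
  have hsub : Z ⊆ {s : ℂ | s.re = 0 ∧ r ≤ ‖s‖ ∧ ‖s‖ ≤ R} := by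
    rintro s ⟨hre, hs0, hFs⟩
    have habs : 0 < ‖s‖ := norm_pos_iff.mpr hs0
    have hre0 : s.re = 0 := by
      rcases lt_or_eq_of_le hre with h | h
      · exact absurd hFs (hF s h)
      · exact h.symm
    refine ⟨hre0, ?_, ?_⟩
    · by_contra hlt
      push_neg at hlt
      have hlt' : ‖s‖ < r₀ := lt_of_lt_of_le hlt (min_le_left _ _)
      exact dominant_ne_zero_aux a γ (Fin.last k) hs0
        (hrbound (‖s‖) habs hlt') hFs
    · by_contra hlt
      push_neg at hlt
      exact dominant_ne_zero_aux a γ 0 hs0 (hRbound (‖s‖) hlt) hFs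
  refine ⟨r, R, hrpos, hrR, ?_, hsub⟩
  -- Finiteness
  by_contra hinf
  have hinf' : Z.Infinite := hinf
  have hK : IsCompact {s : ℂ | s.re = 0 ∧ r ≤ ‖s‖ ∧ ‖s‖ ≤ R} := by
    refine Metric.isCompact_of_isClosed_isBounded ?_ ?_
    · refine IsClosed.inter (isClosed_eq (Complex.continuous_re) continuous_const) ?_
      exact IsClosed.inter (isClosed_le continuous_const continuous_norm)
        (isClosed_le continuous_norm continuous_const)
    · refine (Metric.isBounded_iff_subset_closedBall 0).mpr ⟨R, fun s hs => ?_⟩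
      simpa [Complex.dist_eq] using hs.2.2
  obtain ⟨z, hzK, hacc⟩ := hinf'.exists_accPt_of_subset_isCompact hK hsub
  have hz0 : z ≠ 0 := by
    intro h
    have h2 := hzK.2.1
    rw [h] at h2
    simp at h2
    linarith
  have hzim : z.im ≠ 0 := by
    intro h
    exact hz0 (Complex.ext hzK.1 h)
  have hzslit : z ∈ Complex.slitPlane := Or.inr hzim
  have hFanalytic : AnalyticAt ℂ
      (fun s : ℂ => ∑ i : Fin (k+1), (a i : ℂ) * s ^ (γ i : ℂ)) z := by
    refine Finset.analyticAt_fun_sum _ fun i _ => ?_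
    exact (analyticAt_const).mul ((analyticAt_id).cpow analyticAt_const hzslit)
  rcases hFanalytic.eventually_eq_zero_or_eventually_ne_zero with hzero | hne
  · rw [Metric.eventually_nhds_iff] at hzero
    obtain ⟨ε, hε, hball⟩ := hzero
    have hw : (∑ i : Fin (k+1), (a i : ℂ) * (z + (ε/2 : ℝ)) ^ (γ i : ℂ)) = 0 := by
      refine hball (y := z + (ε/2 : ℝ)) ?_
      simp only [dist_eq_norm]
      rw [show z + (ε/2 : ℝ) - z = ((ε/2 : ℝ) : ℂ) by ring]
      rw [Complex.norm_real]
      rw [Real.norm_eq_abs, abs_of_pos (by linarith)]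
      linarith
    refine hF (z + (ε/2 : ℝ)) ?_ hw
    simp [hzK.1]
    linarith
  · have hfreq : ∃ᶠ w in nhdsWithin z {z}ᶜ, w ∈ Z := by
      rw [Filter.frequently_iff_neBot]
      exact hacc
    obtain ⟨w, hwZ, hwne⟩ := (hfreq.and_eventually hne).exists
    exact hwne hwZ.2.2
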